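/- Let A be an m×n real matrix, b ∈ ℝ^m, Φ(x) = (1/2)‖Ax − b‖₂², and let L be a Lipschitz constant of ∇Φ. Let γ > 0 and β > 2L, suppose Aᵀb ≠ 0, and let (x^k, y^k, z^k) be an ADMM_p sequence with X = ℝ^n such that {x^k} is bounded, so that x^k converges to some x^∞ ≠ 0. Write Λ = supp(x^∞) = {i : x^∞ᵢ ≠ 0}, q^∞ = Aᵀ(Ax^∞ − b), a = ‖x^∞‖₁, r = ‖x^∞‖₂. Assume the nondegeneracy condition: γ·(sign(x^∞ᵢ)/r − (a/r³)·x^∞ᵢ) + q^∞ᵢ = 0 for every i ∈ Λ, and |q^∞ᵢ| < γ/r for every i ∉ Λ. Then there exists K such that supp(x^k) = Λ for all k ≥ K. -/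

import Mathlib

noncomputable section
open Classical

/-- The ℓ¹ norm on ℝ^n. -/
def l1 {n : ℕ} (x : EuclideanSpace ℝ (Fin n)) : ℝ := ∑ i, |x i|

/-- The ratio ‖x‖₁/‖x‖₂ with the convention that it equals 1 at the origin. -/
def ratio {n : ℕ} (x : EuclideanSpace ℝ (Fin n)) : ℝ :=
  if x = 0 then 1 else l1 x / ‖x‖

/-- `(x, y, z)` is an ADMM_p sequence for data `(β, γ, X, Φ)`:
at every step, `x^{k+1}` globally minimizes the proximal subproblem of the ratio `‖·‖₁/‖·‖₂`
over `X`, `y^{k+1}` globally minimizes the `Φ`-subproblem, and `z` is updated by the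
multiplier rule. -/
def ADMMpSeq {n : ℕ} (β γ : ℝ) (X : Set (EuclideanSpace ℝ (Fin n)))
    (Φ : EuclideanSpace ℝ (Fin n) → ℝ)
    (x y z : ℕ → EuclideanSpace ℝ (Fin n)) : Prop :=
  ∀ k : ℕ,
    (x (k + 1) ∈ X ∧ ∀ u ∈ X,
      ratio (x (k + 1)) + β / (2 * γ) * ‖x (k + 1) - (y k - β⁻¹ • z k)‖ ^ 2 ≤
        ratio u + β / (2 * γ) * ‖u - (y k - β⁻¹ • z k)‖ ^ 2) ∧
    (∀ u : EuclideanSpace ℝ (Fin n),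
      Φ (y (k + 1)) + β / 2 * ‖y (k + 1) - x (k + 1) - β⁻¹ • z k‖ ^ 2 ≤
        Φ u + β / 2 * ‖u - x (k + 1) - β⁻¹ • z k‖ ^ 2) ∧
    z (k + 1) = z k + β • (x (k + 1) - y (k + 1))


/-- Matrix–vector multiplication as a map between Euclidean spaces. -/
def mv {m n : ℕ} (A : Matrix (Fin m) (Fin n) ℝ) (x : EuclideanSpace ℝ (Fin n)) :
    EuclideanSpace ℝ (Fin m) :=
  (WithLp.equiv 2 (Fin m → ℝ)).symm (A.mulVec (WithLp.equiv 2 (Fin n → ℝ) x))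

namespace S16

open Filter

lemma normsq_eq {n : ℕ} (x : EuclideanSpace ℝ (Fin n)) : ‖x‖^2 = ∑ i, (x i)^2 := by
  rw [EuclideanSpace.norm_eq, Real.sq_sqrt (by positivity)]
  simp [sq_abs]

lemma abs_coord_le {n : ℕ} (x : EuclideanSpace ℝ (Fin n)) (i : Fin n) : |x i| ≤ ‖x‖ := by
  have h : (x i)^2 ≤ ‖x‖^2 := by
    rw [normsq_eq]
    exact Finset.single_le_sum (f := fun j => (x j)^2) (fun j _ => sq_nonneg _)
      (Finset.mem_univ i)
  calc |x i| = Real.sqrt ((x i)^2) := (Real.sqrt_sq_eq_abs _).symm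
    _ ≤ Real.sqrt (‖x‖^2) := Real.sqrt_le_sqrt h
    _ = ‖x‖ := by rw [Real.sqrt_sq (norm_nonneg _)]

lemma mv_sub {m n : ℕ} (A : Matrix (Fin m) (Fin n) ℝ) (x y : EuclideanSpace ℝ (Fin n)) :
    mv A (x - y) = mv A x - mv A y := by
  simp [mv, Matrix.mulVec_sub]

lemma mv_smul {m n : ℕ} (A : Matrix (Fin m) (Fin n) ℝ) (t : ℝ) (x : EuclideanSpace ℝ (Fin n)) :
    mv A (t • x) = t • mv A x := by
  simp [mv, Matrix.mulVec_smul]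

lemma inner_mv {m n : ℕ} (A : Matrix (Fin m) (Fin n) ℝ) (x : EuclideanSpace ℝ (Fin n))
    (w : EuclideanSpace ℝ (Fin m)) :
    inner ℝ (mv A x) w = (inner ℝ x (mv A.transpose w) : ℝ) := by
  simp only [mv, EuclideanSpace.inner_eq_star_dotProduct, Equiv.apply_symm_apply,
    Matrix.mulVec_transpose, star_trivial]
  show w.ofLp ⬝ᵥ A.mulVec x.ofLp = Matrix.vecMul w.ofLp A ⬝ᵥ x.ofLp
  rw [Matrix.dotProduct_mulVec]

lemma l1_continuous {n : ℕ} : Continuous (l1 (n := n)) := by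
  have : (l1 (n := n)) = fun x => ∑ i, |EuclideanSpace.proj i x| := by
    funext x; simp [l1]
  rw [this]
  exact continuous_finset_sum _ fun i _ => ((EuclideanSpace.proj i).continuous).abs

lemma coord_continuous {n : ℕ} (i : Fin n) :
    Continuous (fun x : EuclideanSpace ℝ (Fin n) => x i) := by
  have : (fun x : EuclideanSpace ℝ (Fin n) => x i) = fun x => EuclideanSpace.proj i x := by
    funext x; simp
  rw [this]; exact (EuclideanSpace.proj i).continuous

lemma descent_aux {m n : ℕ} (A : Matrix (Fin m) (Fin n) ℝ) (b : EuclideanSpace ℝ (Fin m))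
    (β : ℝ) (hβ : 0 < β) (c ys g : EuclideanSpace ℝ (Fin n))
    (hg : g = mv A.transpose (mv A ys - b) + β • (ys - c)) (t : ℝ) :
    1/2 * ‖mv A (ys - t • g) - b‖^2 + β/2 * ‖(ys - t • g) - c‖^2
      = 1/2 * ‖mv A ys - b‖^2 + β/2 * ‖ys - c‖^2 - t * ‖g‖^2
        + t^2 * (1/2 * ‖mv A g‖^2 + β/2 * ‖g‖^2) := by
  have e1 : mv A (ys - t • g) - b = (mv A ys - b) - t • (mv A g) := by
    rw [mv_sub, mv_smul]; abel
  have e2 : (ys - t • g) - c = (ys - c) - t • g := by abel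
  have n1 : ‖mv A (ys - t • g) - b‖^2
      = ‖mv A ys - b‖^2 - 2 * t * inner ℝ (mv A ys - b) (mv A g) + t^2 * ‖mv A g‖^2 := by
    rw [e1, norm_sub_sq_real, real_inner_smul_right, norm_smul]
    simp [mul_pow, sq_abs]
    ring
  have n2 : ‖(ys - t • g) - c‖^2
      = ‖ys - c‖^2 - 2 * t * inner ℝ (ys - c) g + t^2 * ‖g‖^2 := by
    rw [e2, norm_sub_sq_real, real_inner_smul_right, norm_smul]
    simp [mul_pow, sq_abs]
    ring
  have hip : inner ℝ (mv A ys - b) (mv A g) = (inner ℝ (mv A.transpose (mv A ys - b)) g : ℝ) := by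
    rw [real_inner_comm, inner_mv, real_inner_comm]
  have hgg : (inner ℝ (mv A.transpose (mv A ys - b)) g : ℝ) + β * inner ℝ (ys - c) g = ‖g‖^2 :=
    calc (inner ℝ (mv A.transpose (mv A ys - b)) g : ℝ) + β * inner ℝ (ys - c) g
        = inner ℝ (mv A.transpose (mv A ys - b) + β • (ys - c)) g := by
          rw [inner_add_left, real_inner_smul_left]
      _ = (inner ℝ g g : ℝ) := by rw [← hg]
      _ = ‖g‖^2 := real_inner_self_eq_norm_sq g
  rw [n1, n2, hip]
  linear_combination (-t) * hgg

lemma stationary {m n : ℕ} (A : Matrix (Fin m) (Fin n) ℝ) (b : EuclideanSpace ℝ (Fin m))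
    (β : ℝ) (hβ : 0 < β) (c ys : EuclideanSpace ℝ (Fin n))
    (hmin : ∀ u : EuclideanSpace ℝ (Fin n),
      1/2 * ‖mv A ys - b‖^2 + β/2 * ‖ys - c‖^2 ≤ 1/2 * ‖mv A u - b‖^2 + β/2 * ‖u - c‖^2) :
    mv A.transpose (mv A ys - b) + β • (ys - c) = 0 := by
  by_contra hg0
  have hgn : 0 < ‖mv A.transpose (mv A ys - b) + β • (ys - c)‖ := norm_pos_iff.mpr hg0
  obtain ⟨g, hg⟩ : ∃ g, g = mv A.transpose (mv A ys - b) + β • (ys - c) := ⟨_, rfl⟩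
  rw [← hg] at hgn
  obtain ⟨M, hM⟩ : ∃ M, M = 1/2 * ‖mv A g‖^2 + β/2 * ‖g‖^2 := ⟨_, rfl⟩
  have hMpos : 0 < M := by rw [hM]; positivity
  obtain ⟨t, ht⟩ : ∃ t, t = ‖g‖^2 / (2 * M) := ⟨_, rfl⟩
  have htpos : 0 < t := by rw [ht]; positivity
  have key := hmin (ys - t • g)
  rw [descent_aux A b β hβ c ys g hg t, ← hM] at key
  have htM : t * M = ‖g‖^2 / 2 := by
    rw [ht]; field_simp
  have hsq : t^2 * M = t * (t * M) := by ring
  rw [hsq, htM] at key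
  nlinarith [mul_pos htpos (mul_pos hgn hgn), key]

lemma contraction_tendsto_zero {a t : ℕ → ℝ} {ρ : ℝ} (hρ0 : 0 ≤ ρ) (hρ1 : ρ < 1)
    (ha : ∀ k, 0 ≤ a k) {K : ℕ} (hrec : ∀ k, K ≤ k → a (k+1) ≤ ρ * a k + t k)
    (ht : Tendsto t atTop (nhds 0)) : Tendsto a atTop (nhds 0) := by
  rw [Metric.tendsto_atTop]
  intro ε hε
  have h1ρ : 0 < 1 - ρ := by linarith
  have hδ : 0 < (1 - ρ) * ε / 2 := by positivity
  rw [Metric.tendsto_atTop] at ht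
  obtain ⟨N0, hN0⟩ := ht ((1 - ρ) * ε / 2) hδ
  obtain ⟨N, hN⟩ : ∃ N, N = max N0 K := ⟨_, rfl⟩
  have hbound : ∀ j : ℕ, a (N + j) ≤ ρ^j * a N + ε/2 := by
    intro j
    induction j with
    | zero => simp; linarith [ha N, hε]
    | succ j ih =>
      have h1 : a (N + j + 1) ≤ ρ * a (N + j) + t (N + j) :=
        hrec (N + j) (by rw [hN]; omega)
      have h2 : |t (N + j) - 0| < (1 - ρ) * ε / 2 := hN0 (N + j) (by rw [hN]; omega)
      rw [sub_zero] at h2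
      have h3 : t (N + j) < (1 - ρ) * ε / 2 := lt_of_le_of_lt (le_abs_self _) h2
      have he : N + (j + 1) = (N + j) + 1 := by omega
      rw [he]
      have h4 := mul_le_mul_of_nonneg_left ih hρ0
      have h5 : ρ * (ρ^j * a N + ε/2) + (1 - ρ) * ε / 2 = ρ^(j+1) * a N + ε/2 := by
        rw [pow_succ]; ring
      linarith
  have hpow : Tendsto (fun j => ρ^j * a N) atTop (nhds 0) := by
    have := tendsto_pow_atTop_nhds_zero_of_abs_lt_one (r := ρ)
      (by rw [abs_of_nonneg hρ0]; exact hρ1)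
    simpa using this.mul_const (a N)
  rw [Metric.tendsto_atTop] at hpow
  obtain ⟨J, hJ⟩ := hpow (ε/2) (by positivity)
  refine ⟨N + J, fun k hk => ?_⟩
  have hk' : k = N + (k - N) := by omega
  have h1 : a k ≤ ρ^(k - N) * a N + ε/2 := by
    have := hbound (k - N); rwa [← hk'] at this
  have h2 : |ρ^(k - N) * a N - 0| < ε/2 := hJ (k - N) (by omega)
  rw [sub_zero] at h2
  have h3 : ρ^(k - N) * a N < ε/2 := lt_of_le_of_lt (le_abs_self _) h2
  rw [Real.dist_eq, sub_zero, abs_of_nonneg (ha k)]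
  linarith

lemma key_real (γ β au T r s vi p : ℝ) (hγ : 0 < γ) (hβ : 0 < β) (hau : 0 ≤ au)
    (hT : 0 < T) (hr : 0 < r) (hs : 0 < s) (hsr : s ≤ r) (hnsq : r^2 = s^2 + T^2)
    (h1 : (au + T)/r - au/s ≤ β/(2*γ) * (2*p - T^2)) (hp : p ≤ T*vi) (hvi : 0 ≤ vi) :
    (1/r) * (1 - au*T/(2*s^2)) ≤ (β/γ) * vi := by
  have hC : 0 < β/(2*γ) := by positivity
  have h5 : (r - s) * (2*s) ≤ T^2 := by nlinarith
  have e1 : (au + T)/r - au/s = T/r - au*((r - s)/(r*s)) := by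
    field_simp; ring
  have e2 : au*((r - s)/(r*s)) ≤ au*(T^2/(2*s^2*r)) := by
    apply mul_le_mul_of_nonneg_left _ hau
    rw [div_le_div_iff₀ (by positivity) (by positivity)]
    nlinarith [mul_le_mul_of_nonneg_right h5 (le_of_lt (mul_pos hs hr))]
  have heq : β/γ = 2*(β/(2*γ)) := by field_simp
  have step2 : β/(2*γ) * (2*p - T^2) ≤ (β/γ) * vi * T := by
    rw [heq]
    nlinarith [mul_nonneg hC.le (sub_nonneg.mpr hp), mul_nonneg hC.le (sq_nonneg T)]
  have main : T/r - au*(T^2/(2*s^2*r)) ≤ (β/γ) * vi * T := by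
    rw [e1] at h1
    linarith
  have hfin : (1/r) * (1 - au*T/(2*s^2)) * T = T/r - au*(T^2/(2*s^2*r)) := by
    field_simp
  have := main
  rw [← hfin] at this
  exact le_of_mul_le_mul_right this hT

lemma key_ineq {n : ℕ} (γ β : ℝ) (hγ : 0 < γ) (hβ : 0 < β)
    (v w : EuclideanSpace ℝ (Fin n)) (i : Fin n)
    (hmin : ∀ u : EuclideanSpace ℝ (Fin n),
      ratio w + β / (2 * γ) * ‖w - v‖ ^ 2 ≤ ratio u + β / (2 * γ) * ‖u - v‖ ^ 2)
    (hti : w i ≠ 0) (hu0 : w - (w i) • EuclideanSpace.single i (1:ℝ) ≠ 0) :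
    (1 / ‖w‖) * (1 - l1 (w - (w i) • EuclideanSpace.single i (1:ℝ)) * |w i|
        / (2 * ‖w - (w i) • EuclideanSpace.single i (1:ℝ)‖^2))
      ≤ (β / γ) * |v i| := by
  obtain ⟨u, hu⟩ : ∃ u, u = w - (w i) • EuclideanSpace.single i (1:ℝ) := ⟨_, rfl⟩
  rw [← hu] at hu0 ⊢
  -- coordinates of u
  have hcoord : ∀ j, u j = if j = i then 0 else w j := by
    intro j
    rw [hu]
    by_cases h : j = i
    · subst h
      simp [EuclideanSpace.single_apply]
    · simp [EuclideanSpace.single_apply, h]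
  have hui : u i = 0 := by rw [hcoord]; simp
  have hune : ∀ j, j ≠ i → u j = w j := by intro j hj; rw [hcoord]; simp [hj]
  -- l1 relation
  have hl1 : l1 w = l1 u + |w i| := by
    have h : l1 w - l1 u = |w i| := by
      rw [l1, l1, ← Finset.sum_sub_distrib, Finset.sum_eq_single i]
      · rw [hui]; simp
      · intro j _ hj; rw [hune j hj]; ring
      · intro h; exact absurd (Finset.mem_univ i) h
    linarith
  -- norm relation
  have hnsq : ‖w‖^2 = ‖u‖^2 + (w i)^2 := by
    have h : ‖w‖^2 - ‖u‖^2 = (w i)^2 := by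
      rw [normsq_eq, normsq_eq, ← Finset.sum_sub_distrib, Finset.sum_eq_single i]
      · rw [hui]; ring
      · intro j _ hj; rw [hune j hj]; ring
      · intro h; exact absurd (Finset.mem_univ i) h
    linarith
  -- quadratic difference
  have hquad : ‖u - v‖^2 - ‖w - v‖^2 = 2 * (w i) * (v i) - (w i)^2 := by
    rw [normsq_eq, normsq_eq]
    rw [← Finset.sum_sub_distrib]
    rw [Finset.sum_eq_single i]
    · have h1 : (u - v) i = u i - v i := rfl
      have h2 : (w - v) i = w i - v i := rfl
      rw [h1, h2, hui]
      ring
    · intro j _ hj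
      have h1 : (u - v) j = u j - v j := rfl
      have h2 : (w - v) j = w j - v j := rfl
      rw [h1, h2, hune j hj]
      ring
    · intro h; exact absurd (Finset.mem_univ i) h
  -- positivity facts
  have hw0 : w ≠ 0 := by
    intro h; apply hti; rw [h]; rfl
  have hrw : 0 < ‖w‖ := norm_pos_iff.mpr hw0
  have hru : 0 < ‖u‖ := norm_pos_iff.mpr hu0
  have hT : 0 < |w i| := abs_pos.mpr hti
  have hrwu : ‖u‖ ≤ ‖w‖ := by
    have := sq_nonneg (w i)
    nlinarith [hnsq, norm_nonneg u, norm_nonneg w]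
  have hau : 0 ≤ l1 u := Finset.sum_nonneg (fun j _ => abs_nonneg _)
  -- optimality applied at u
  have h3 := hmin u
  rw [ratio, ratio, if_neg hw0, if_neg hu0] at h3
  -- step 1
  have step1 : l1 w / ‖w‖ - l1 u / ‖u‖ ≤ β / (2*γ) * (2 * (w i) * (v i) - (w i)^2) := by
    have hq2 : β/(2*γ) * (‖u - v‖^2 - ‖w - v‖^2) = β/(2*γ) * (2*(w i)*(v i) - (w i)^2) := by
      rw [hquad]
    nlinarith [h3, hq2]
  have hstep1 : (l1 u + |w i|)/‖w‖ - l1 u/‖u‖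
      ≤ β/(2*γ) * (2*((w i)*(v i)) - |w i|^2) := by
    rw [← hl1, sq_abs]
    calc l1 w / ‖w‖ - l1 u / ‖u‖ ≤ β / (2*γ) * (2 * (w i) * (v i) - (w i)^2) := step1
      _ = β/(2*γ) * (2*((w i)*(v i)) - (w i)^2) := by ring
  have hp : (w i)*(v i) ≤ |w i| * |v i| := by
    calc (w i) * (v i) ≤ |(w i) * (v i)| := le_abs_self _
      _ = |w i| * |v i| := abs_mul _ _
  have hnsq' : ‖w‖^2 = ‖u‖^2 + |w i|^2 := by rw [sq_abs]; exact hnsq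
  exact key_real γ β (l1 u) (|w i|) (‖w‖) (‖u‖) (|v i|) ((w i)*(v i)) hγ hβ hau hT hrw hru
    hrwu hnsq' hstep1 hp (abs_nonneg _)

end S16

open Filter S16 in
theorem stmt16 {m n : ℕ} (A : Matrix (Fin m) (Fin n) ℝ) (b : EuclideanSpace ℝ (Fin m))
    (Φ : EuclideanSpace ℝ (Fin n) → ℝ)
    (hΦ : Φ = fun x => 1 / 2 * ‖mv A x - b‖ ^ 2)
    (L : ℝ)
    (hL : ∀ x y : EuclideanSpace ℝ (Fin n),
      ‖mv A.transpose (mv A x - b) - mv A.transpose (mv A y - b)‖ ≤ L * ‖x - y‖)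
    (γ β : ℝ) (hγ : 0 < γ) (hβ : 2 * L < β)
    (hAb : mv A.transpose b ≠ 0)
    (x y z : ℕ → EuclideanSpace ℝ (Fin n))
    (hADMM : ADMMpSeq β γ Set.univ Φ x y z)
    (hbdd : ∃ C : ℝ, ∀ k, ‖x k‖ ≤ C)
    (xinf : EuclideanSpace ℝ (Fin n))
    (hconv : Filter.Tendsto x Filter.atTop (nhds xinf)) (hxinf : xinf ≠ 0)
    (qinf : EuclideanSpace ℝ (Fin n)) (hq : qinf = mv A.transpose (mv A xinf - b))
    (hnd1 : ∀ i, xinf i ≠ 0 →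
      γ * ((if 0 < xinf i then 1 else -1) / ‖xinf‖ - l1 xinf / ‖xinf‖ ^ 3 * xinf i)
        + qinf i = 0)
    (hnd2 : ∀ i, xinf i = 0 → |qinf i| < γ / ‖xinf‖) :
    ∃ K : ℕ, ∀ k ≥ K, ∀ i, x k i ≠ 0 ↔ xinf i ≠ 0 := by
  classical
  -- basic positivity facts
  have hn : n ≠ 0 := by
    intro h
    subst h
    exact hxinf (Subsingleton.elim _ _)
  have hL0 : 0 ≤ L := by
    obtain ⟨i0⟩ : Nonempty (Fin n) := ⟨⟨0, Nat.pos_of_ne_zero hn⟩⟩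
    have h := hL (EuclideanSpace.single i0 (1:ℝ)) 0
    rw [sub_zero, EuclideanSpace.norm_single] at h
    simp only [norm_one, mul_one] at h
    exact le_trans (norm_nonneg _) h
  have hβ0 : 0 < β := by linarith
  have hβL : 0 < β - L := by linarith
  -- the gradient map
  obtain ⟨G, hG⟩ : ∃ G : EuclideanSpace ℝ (Fin n) → EuclideanSpace ℝ (Fin n),
      G = fun w => mv A.transpose (mv A w - b) := ⟨_, rfl⟩
  have hGlip : ∀ a c, ‖G a - G c‖ ≤ L * ‖a - c‖ := by
    intro a c; rw [hG]; exact hL a c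
  -- z is the gradient at y
  have hz : ∀ k, z (k + 1) = G (y (k + 1)) := by
    intro k
    obtain ⟨-, hymin, hzup⟩ := hADMM k
    obtain ⟨c, hc⟩ : ∃ c, c = x (k+1) + β⁻¹ • z k := ⟨_, rfl⟩
    have hmin : ∀ u : EuclideanSpace ℝ (Fin n),
        1/2 * ‖mv A (y (k+1)) - b‖^2 + β/2 * ‖y (k+1) - c‖^2 ≤
          1/2 * ‖mv A u - b‖^2 + β/2 * ‖u - c‖^2 := by
      intro u
      have h := hymin u
      rw [hΦ] at h
      have e : ∀ w : EuclideanSpace ℝ (Fin n), w - x (k+1) - β⁻¹ • z k = w - c := by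
        intro w; rw [hc]; abel
      rw [e, e] at h
      exact h
    have hst := stationary A b β hβ0 c (y (k+1)) hmin
    have hGy : G (y (k+1)) = β • (c - y (k+1)) := by
      rw [hG]
      show mv A.transpose (mv A (y (k+1)) - b) = β • (c - y (k+1))
      have : mv A.transpose (mv A (y (k+1)) - b) = - (β • (y (k+1) - c)) := by
        rw [eq_neg_iff_add_eq_zero]; exact hst
      rw [this, ← smul_neg, neg_sub]
    rw [hzup, hGy, hc]
    have hbb : β • (β⁻¹ • z k) = z k := by
      rw [smul_smul, mul_inv_cancel₀ hβ0.ne', one_smul]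
    rw [show x (k+1) + β⁻¹ • z k - y (k+1) = (x (k+1) - y (k+1)) + β⁻¹ • z k by abel,
      smul_add, hbb]
    abel
  -- difference sequences
  obtain ⟨d, hdd⟩ : ∃ d : ℕ → ℝ, d = fun k => ‖y (k+1) - y k‖ := ⟨_, rfl⟩
  obtain ⟨s, hss⟩ : ∃ s : ℕ → ℝ, s = fun k => ‖x (k+1) - x k‖ := ⟨_, rfl⟩
  have hyx : ∀ k, 1 ≤ k → y (k+1) - x (k+1) = β⁻¹ • (G (y k) - G (y (k+1))) := by
    intro k hk
    obtain ⟨j, rfl⟩ : ∃ j, k = j + 1 := ⟨k - 1, by omega⟩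
    have hzup := (hADMM (j+1)).2.2
    rw [hz (j+1), hz j] at hzup
    have : β • (y (j+1+1) - x (j+1+1)) = G (y (j+1)) - G (y (j+1+1)) := by
      rw [hzup, sub_add_cancel_left, ← smul_neg, neg_sub]
    calc y (j+1+1) - x (j+1+1) = β⁻¹ • (β • (y (j+1+1) - x (j+1+1))) := by
          rw [smul_smul, inv_mul_cancel₀ hβ0.ne', one_smul]
      _ = β⁻¹ • (G (y (j+1)) - G (y (j+1+1))) := by rw [this]
  have he : ∀ k, 1 ≤ k → ‖y (k+1) - x (k+1)‖ ≤ L/β * d k := by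
    intro k hk
    rw [hyx k hk, norm_smul]
    have h1 : ‖G (y k) - G (y (k+1))‖ ≤ L * ‖y k - y (k+1)‖ := hGlip _ _
    have h2 : ‖y k - y (k+1)‖ = d k := by rw [hdd]; exact (norm_sub_rev _ _)
    rw [h2] at h1
    have h3 : ‖(β⁻¹ : ℝ)‖ = β⁻¹ := by
      rw [Real.norm_eq_abs, abs_of_pos (by positivity)]
    rw [h3]
    calc β⁻¹ * ‖G (y k) - G (y (k+1))‖ ≤ β⁻¹ * (L * d k) := by
          apply mul_le_mul_of_nonneg_left h1 (by positivity)
      _ = L/β * d k := by field_simp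
  -- the contraction recursion
  have hd : ∀ k, 1 ≤ k → d (k+1) ≤ (L/(β-L)) * d k + (β/(β-L)) * s (k+1) := by
    intro k hk
    have htri : d (k+1) ≤ ‖y (k+2) - x (k+2)‖ + s (k+1) + ‖y (k+1) - x (k+1)‖ := by
      rw [hdd, hss]
      have hid : y (k+2) - y (k+1)
          = (y (k+2) - x (k+2)) + (x (k+2) - x (k+1)) + (x (k+1) - y (k+1)) := by abel
      calc ‖y (k+1+1) - y (k+1)‖
          = ‖(y (k+2) - x (k+2)) + (x (k+2) - x (k+1)) + (x (k+1) - y (k+1))‖ := by rw [← hid]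
        _ ≤ ‖(y (k+2) - x (k+2)) + (x (k+2) - x (k+1))‖ + ‖x (k+1) - y (k+1)‖ :=
            norm_add_le _ _
        _ ≤ ‖y (k+2) - x (k+2)‖ + ‖x (k+2) - x (k+1)‖ + ‖x (k+1) - y (k+1)‖ := by
            have := norm_add_le (y (k+2) - x (k+2)) (x (k+2) - x (k+1))
            linarith
        _ = ‖y (k+2) - x (k+2)‖ + ‖x (k+1+1) - x (k+1)‖ + ‖y (k+1) - x (k+1)‖ := by
            rw [norm_sub_rev (x (k+1)) (y (k+1))]
    have h1 : ‖y (k+2) - x (k+2)‖ ≤ L/β * d (k+1) := he (k+1) (by omega)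
    have h2 : ‖y (k+1) - x (k+1)‖ ≤ L/β * d k := he k hk
    have hcomb : d (k+1) ≤ L/β * d (k+1) + s (k+1) + L/β * d k := by linarith
    -- clear denominators
    have hd0 : 0 ≤ d k := by rw [hdd]; exact norm_nonneg _
    have hs0 : 0 ≤ s (k+1) := by rw [hss]; exact norm_nonneg _
    have hβne : (β:ℝ) ≠ 0 := hβ0.ne'
    have hcomb2 : (β - L) * d (k+1) ≤ L * d k + β * s (k+1) := by
      have := mul_le_mul_of_nonneg_left hcomb hβ0.le
      have hexp : β * (L/β * d (k+1) + s (k+1) + L/β * d k)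
          = L * d (k+1) + β * s (k+1) + L * d k := by field_simp
      rw [hexp] at this
      nlinarith
    rw [div_mul_eq_mul_div, div_mul_eq_mul_div, ← add_div, le_div_iff₀ hβL]
    linarith [hcomb2]
  -- s (k+1) → 0
  have hx1 : Tendsto (fun k => x (k+1)) atTop (nhds xinf) :=
    hconv.comp (tendsto_add_atTop_nat 1)
  have hx2 : Tendsto (fun k => x (k+2)) atTop (nhds xinf) :=
    hconv.comp (tendsto_add_atTop_nat 2)
  have hst : Tendsto (fun k => (β/(β-L)) * s (k+1)) atTop (nhds 0) := by
    have h1 : Tendsto (fun k => x (k+2) - x (k+1)) atTop (nhds 0) := by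
      have := hx2.sub hx1
      simpa using this
    have h2 : Tendsto (fun k => s (k+1)) atTop (nhds 0) := by
      rw [hss]
      have := h1.norm
      simpa using this
    have := h2.const_mul (β/(β-L))
    simpa using this
  -- d → 0
  have hρ0 : 0 ≤ L/(β-L) := by positivity
  have hρ1 : L/(β-L) < 1 := by
    rw [div_lt_one hβL]; linarith
  have hdz : Tendsto d atTop (nhds 0) := by
    refine contraction_tendsto_zero hρ0 hρ1 (fun k => ?_) (K := 1) hd hst
    rw [hdd]; exact norm_nonneg _
  -- y → xinf
  have hyx0 : Tendsto (fun k => y k - x k) atTop (nhds 0) := by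
    rw [← tendsto_add_atTop_iff_nat 1]
    rw [tendsto_zero_iff_norm_tendsto_zero]
    apply squeeze_zero' (Eventually.of_forall fun k => norm_nonneg _)
      (f := fun k => ‖y (k+1) - x (k+1)‖) (g := fun k => L/β * d k)
    · filter_upwards [eventually_ge_atTop 1] with k hk
      exact he k hk
    · have := hdz.const_mul (L/β)
      simpa using this
  have hyL : Tendsto y atTop (nhds xinf) := by
    have := hyx0.add hconv
    simpa using this
  -- z → qinf
  have hyinf0 : Tendsto (fun k => ‖y k - xinf‖) atTop (nhds 0) := by
    have h1 : Tendsto (fun k => y k - xinf) atTop (nhds 0) := by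
      have := hyL.sub (tendsto_const_nhds (x := xinf))
      simpa using this
    have := h1.norm
    simpa using this
  have hzL : Tendsto z atTop (nhds qinf) := by
    have hGy : Tendsto (fun k => G (y k)) atTop (nhds (G xinf)) := by
      rw [tendsto_iff_norm_sub_tendsto_zero]
      apply squeeze_zero' (Eventually.of_forall fun k => norm_nonneg _)
        (g := fun k => L * ‖y k - xinf‖)
      · exact Eventually.of_forall fun k => hGlip (y k) xinf
      · have := hyinf0.const_mul L
        simpa using this
    have heq : z =ᶠ[atTop] fun k => G (y k) := by
      filter_upwards [eventually_ge_atTop 1] with k hk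
      obtain ⟨j, rfl⟩ : ∃ j, k = j + 1 := ⟨k - 1, by omega⟩
      exact hz j
    have hq' : qinf = G xinf := by rw [hG]; exact hq
    rw [hq']
    exact hGy.congr' heq.symm
  -- v → vinf
  have hv : Tendsto (fun k => y k - β⁻¹ • z k) atTop (nhds (xinf - β⁻¹ • qinf)) :=
    hyL.sub (hzL.const_smul β⁻¹)
  have hrpos : 0 < ‖xinf‖ := norm_pos_iff.mpr hxinf
  -- coordinates in the support stay nonzero
  have E1 : ∀ i, xinf i ≠ 0 → ∀ᶠ k in atTop, x k i ≠ 0 := by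
    intro i hi
    have hco : Tendsto (fun k => x k i) atTop (nhds (xinf i)) :=
      ((coord_continuous i).tendsto xinf).comp hconv
    exact hco.eventually_ne hi
  -- coordinates outside the support vanish
  have E0 : ∀ i, xinf i = 0 → ∀ᶠ k in atTop, x k i = 0 := by
    intro i hi
    by_contra h0
    rw [Filter.not_eventually] at h0
    have hfreq : ∃ᶠ k in atTop, x (k+1) i ≠ 0 := by
      rw [Filter.frequently_atTop] at h0 ⊢
      intro N
      obtain ⟨k, hk, hkne⟩ := h0 (N+1)
      refine ⟨k - 1, by omega, ?_⟩
      have hkk : k - 1 + 1 = k := by omega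
      rw [hkk]
      exact hkne
    obtain ⟨φ, hφmono, hφ⟩ := Filter.extraction_of_frequently_atTop hfreq
    have hφtop : Tendsto φ atTop atTop := hφmono.tendsto_atTop
    have hg : Tendsto (fun j => φ j + 1) atTop atTop :=
      tendsto_atTop_mono (fun j => (hφmono.id_le j).trans (Nat.le_succ _)) tendsto_id
    have hX : Tendsto (fun j => x (φ j + 1)) atTop (nhds xinf) := hconv.comp hg
    -- coordinate of X tends to 0
    have hXi : Tendsto (fun j => x (φ j + 1) i) atTop (nhds 0) := by
      have := ((coord_continuous i).tendsto xinf).comp hX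
      rwa [hi] at this
    -- the truncated sequence
    have hU : Tendsto (fun j => x (φ j + 1) - (x (φ j + 1) i) • EuclideanSpace.single i (1:ℝ))
        atTop (nhds xinf) := by
      have h1 : Tendsto (fun j => (x (φ j + 1) i) • EuclideanSpace.single i (1:ℝ))
          atTop (nhds ((0:ℝ) • EuclideanSpace.single i (1:ℝ))) :=
        hXi.smul_const _
      rw [zero_smul] at h1
      have := hX.sub h1
      simpa using this
    have hUne : ∀ᶠ j in atTop, (x (φ j + 1) - (x (φ j + 1) i) • EuclideanSpace.single i (1:ℝ)) ≠ 0 :=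
      hU.eventually_ne hxinf
    -- limits of the two sides of the key inequality
    have hnX : Tendsto (fun j => ‖x (φ j + 1)‖) atTop (nhds ‖xinf‖) := hX.norm
    have hnU : Tendsto (fun j => ‖x (φ j + 1) - (x (φ j + 1) i) • EuclideanSpace.single i (1:ℝ)‖)
        atTop (nhds ‖xinf‖) := hU.norm
    have hl1U : Tendsto (fun j => l1 (x (φ j + 1) - (x (φ j + 1) i) • EuclideanSpace.single i (1:ℝ)))
        atTop (nhds (l1 xinf)) := (l1_continuous.tendsto xinf).comp hU
    have hXabs : Tendsto (fun j => |x (φ j + 1) i|) atTop (nhds 0) := by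
      have := hXi.abs
      simpa using this
    have hLten : Tendsto (fun j => (1 / ‖x (φ j + 1)‖) *
        (1 - l1 (x (φ j + 1) - (x (φ j + 1) i) • EuclideanSpace.single i (1:ℝ)) * |x (φ j + 1) i|
          / (2 * ‖x (φ j + 1) - (x (φ j + 1) i) • EuclideanSpace.single i (1:ℝ)‖^2)))
        atTop (nhds (1 / ‖xinf‖)) := by
      have hden : Tendsto (fun j =>
          2 * ‖x (φ j + 1) - (x (φ j + 1) i) • EuclideanSpace.single i (1:ℝ)‖^2)
          atTop (nhds (2 * ‖xinf‖^2)) := by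
        have := (hnU.pow 2).const_mul 2
        simpa using this
      have hnum : Tendsto (fun j =>
          l1 (x (φ j + 1) - (x (φ j + 1) i) • EuclideanSpace.single i (1:ℝ)) * |x (φ j + 1) i|)
          atTop (nhds 0) := by
        have := hl1U.mul hXabs
        simpa using this
      have hfrac := hnum.div hden (mul_pos two_pos (pow_pos hrpos 2)).ne'
      have h1 : Tendsto (fun j => (1:ℝ) / ‖x (φ j + 1)‖) atTop (nhds (1 / ‖xinf‖)) :=
        tendsto_const_nhds.div hnX hrpos.ne'
      have h2 := h1.mul ((tendsto_const_nhds (x := (1:ℝ))).sub hfrac)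
      have : (1 / ‖xinf‖) * (1 - 0 / (2 * ‖xinf‖^2)) = 1 / ‖xinf‖ := by
        rw [zero_div, sub_zero, mul_one]
      rw [← this]
      convert h2 using 2
      rfl
    have hvi : Tendsto (fun j => (β/γ) * |(y (φ j) - β⁻¹ • z (φ j)) i|) atTop
        (nhds ((β/γ) * |(xinf - β⁻¹ • qinf) i|)) := by
      have h1 : Tendsto (fun j => (y (φ j) - β⁻¹ • z (φ j))) atTop (nhds (xinf - β⁻¹ • qinf)) :=
        hv.comp hφtop
      have h2 := (((coord_continuous i).tendsto _).comp h1).abs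
      exact h2.const_mul _
    -- the key inequality eventually
    have hle : ∀ᶠ j in atTop, (1 / ‖x (φ j + 1)‖) *
        (1 - l1 (x (φ j + 1) - (x (φ j + 1) i) • EuclideanSpace.single i (1:ℝ)) * |x (φ j + 1) i|
          / (2 * ‖x (φ j + 1) - (x (φ j + 1) i) • EuclideanSpace.single i (1:ℝ)‖^2))
        ≤ (β/γ) * |(y (φ j) - β⁻¹ • z (φ j)) i| := by
      filter_upwards [hUne] with j hj
      have hmin := (hADMM (φ j)).1.2
      exact key_ineq γ β hγ hβ0 (y (φ j) - β⁻¹ • z (φ j)) (x (φ j + 1)) i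
        (fun u => hmin u (Set.mem_univ u)) (hφ j) hj
    have hfinal : 1 / ‖xinf‖ ≤ (β/γ) * |(xinf - β⁻¹ • qinf) i| :=
      le_of_tendsto_of_tendsto hLten hvi hle
    -- contradiction with the nondegeneracy condition
    have hco : (xinf - β⁻¹ • qinf) i = xinf i - β⁻¹ * qinf i := rfl
    rw [hco, hi, zero_sub, abs_neg, abs_mul, abs_of_pos (by positivity : (0:ℝ) < β⁻¹)] at hfinal
    have hq2 := hnd2 i hi
    -- (β/γ) * (β⁻¹ * |qinf i|) = |qinf i| / γ < (γ/‖xinf‖)/γ = 1/‖xinf‖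
    have h3 : (β/γ) * (β⁻¹ * |qinf i|) = |qinf i| / γ := by
      field_simp
    rw [h3] at hfinal
    have h4 : |qinf i| / γ < 1 / ‖xinf‖ := by
      rw [div_lt_iff₀ hγ]
      calc |qinf i| < γ / ‖xinf‖ := hq2
        _ = 1 / ‖xinf‖ * γ := by ring
    linarith
  -- combine
  have hall : ∀ᶠ k in atTop, ∀ i, (x k i ≠ 0 ↔ xinf i ≠ 0) := by
    rw [Filter.eventually_all]
    intro i
    by_cases hi : xinf i = 0
    · filter_upwards [E0 i hi] with k hk
      simp [hk, hi]
    · filter_upwards [E1 i hi] with k hk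
      simp [hk, hi]
  rw [Filter.eventually_atTop] at hall
  obtain ⟨K, hK⟩ := hall
  exact ⟨K, hK⟩
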